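/- Let φ be a growing substitution on A and let c : ℕ → ℕ be a sequence. Then there are at most |A|³ nonperiodic points x ∈ X_φ admitting a desubstitution sequence (x^i)_{i≥0} in X_φ with x⁰ = x, x^i = T^{c_i}(φ(x^{i+1})), and 0 ≤ c_i < |φ(x^{i+1}_0)| for all i, where the desubstitution is recognizable (unique) on nonperiodic points. -/

import Mathlib

set_option linter.unusedSectionVars false


/-- The extension of a substitution `φ : A → A*` to finite words, by concatenation. -/
def substWord {A : Type*} (φ : A → List A) (w : List A) : List A := w.flatMap φ

/-- The starting position in `φ(x)` of the image block `φ(x j)` of the `j`-th letter of a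
biinfinite sequence `x` (with position `0` at the start of `φ(x 0)`). -/
def blockStart {A : Type*} (φ : A → List A) (x : ℤ → A) (j : ℤ) : ℤ :=
  if 0 ≤ j then ∑ t ∈ Finset.range j.toNat, ((φ (x (t : ℤ))).length : ℤ)
  else - ∑ t ∈ Finset.range (-j).toNat, ((φ (x (-(t : ℤ) - 1))).length : ℤ)

open Classical in
/-- The extension of a substitution `φ` to biinfinite sequences:
`φ(…x₋₁.x₀x₁…) = …φ(x₋₁).φ(x₀)φ(x₁)…`, position `0` being the start of `φ(x 0)`. -/
noncomputable def substZgen {A : Type*} [Inhabited A] (φ : A → List A) (x : ℤ → A) :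
    ℤ → A :=
  fun n =>
    if h : ∃ j : ℤ, blockStart φ x j ≤ n ∧ n < blockStart φ x (j + 1) then
      (φ (x h.choose)).getD (n - blockStart φ x h.choose).toNat default
    else default

/-- The shift `T^c` on biinfinite sequences (`T` is the left shift). -/
def shiftZ {A : Type*} (c : ℤ) (x : ℤ → A) : ℤ → A := fun n => x (n + c)

/-- A biinfinite sequence `x` belongs to the subshift `X_φ` generated by the substitution
`φ`: every factor of `x` appears in `φ^n(a)` for some letter `a` and some `n`. -/
def memXphi {A : Type*} (φ : A → List A) (x : ℤ → A) : Prop :=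
  ∀ (i : ℤ) (L : ℕ), ∃ (a : A) (n : ℕ),
    (List.ofFn (fun j : Fin L => x (i + j))) <:+: (substWord φ)^[n] [a]

/-- A biinfinite sequence is (shift-)periodic. -/
def periodicZ {A : Type*} (x : ℤ → A) : Prop :=
  ∃ p : ℕ, 0 < p ∧ ∀ n : ℤ, x (n + p) = x n


namespace DesubAux

variable {A : Type*}

lemma sum_Ico_succ_top' {M : Type*} [AddCommMonoid M] {a b : ℤ} (h : a ≤ b) (f : ℤ → M) :
    ∑ i ∈ Finset.Ico a (b+1), f i = (∑ i ∈ Finset.Ico a b, f i) + f b := by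
  have h2 : Finset.Ico a (b+1) = insert b (Finset.Ico a b) := by
    ext n; simp only [Finset.mem_Ico, Finset.mem_insert]; omega
  rw [h2, Finset.sum_insert (by simp), add_comm]

lemma sum_Ico_consec {M : Type*} [AddCommMonoid M] {a b c : ℤ} (h1 : a ≤ b) (h2 : b ≤ c)
    (f : ℤ → M) :
    (∑ i ∈ Finset.Ico a b, f i) + ∑ i ∈ Finset.Ico b c, f i = ∑ i ∈ Finset.Ico a c, f i := by
  rw [← Finset.sum_union (Finset.Ico_disjoint_Ico_consecutive a b c),
    Finset.Ico_union_Ico_eq_Ico h1 h2]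

/-- shift reindexing of an Ico sum over ℤ -/
lemma sum_Ico_shift {M : Type*} [AddCommMonoid M] (a b c : ℤ) (f : ℤ → M) :
    ∑ n ∈ Finset.Ico a b, f (n + c) = ∑ m ∈ Finset.Ico (a+c) (b+c), f m := by
  rw [← Finset.map_add_right_Ico a b c, Finset.sum_map]
  rfl

/-- Ico-to-range reindexing -/
lemma sum_Ico_range {M : Type*} [AddCommMonoid M] (L : ℕ) (a : ℤ) (f : ℤ → M) :
    ∑ n ∈ Finset.Ico a (a + (L:ℤ)), f n = ∑ k ∈ Finset.range L, f (a + k) := by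
  induction L with
  | zero => simp
  | succ L ih =>
      rw [show a + ((L+1:ℕ):ℤ) = (a + (L:ℤ)) + 1 by push_cast; ring,
        sum_Ico_succ_top' (by omega), ih, Finset.sum_range_succ]

lemma getD_sum {M : Type*} [AddCommMonoid M] [Inhabited A] (g : A → M) (l : List A) :
    ∑ k ∈ Finset.range l.length, g (l.getD k default) = (l.map g).sum := by
  induction l with
  | nil => simp
  | cons a l ih =>
      rw [List.length_cons, Finset.sum_range_succ']
      simp only [List.getD] at ih
      simp [ih, List.getD, add_comm]

variable (φ : A → List A)

lemma substWord_singleton (a : A) : substWord φ [a] = φ a := by simp [substWord]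

lemma iterate_flatMap (i : ℕ) (l : List A) :
    (substWord φ)^[i] l = l.flatMap fun b => (substWord φ)^[i] [b] := by
  induction i generalizing l with
  | zero => simp
  | succ i ih =>
      rw [Function.iterate_succ_apply', ih, substWord, List.flatMap_assoc]
      congr 1
      funext b
      rw [Function.iterate_succ_apply']
      rfl

/-- length of the `i`-th iterate on a letter -/
def Wl (i : ℕ) (a : A) : ℕ := ((substWord φ)^[i] [a]).length

lemma Wl_zero (a : A) : Wl φ 0 a = 1 := rfl

lemma Wl_succ (i : ℕ) (a : A) : Wl φ (i+1) a = ((φ a).map (Wl φ i)).sum := by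
  unfold Wl
  rw [Function.iterate_succ_apply, substWord_singleton, iterate_flatMap, List.length_flatMap]

variable (hne : ∀ a, φ a ≠ [])
include hne

lemma Wl_pos (i : ℕ) (a : A) : 0 < Wl φ i a := by
  induction i generalizing a with
  | zero => simp [Wl_zero]
  | succ i ih =>
      rw [Wl_succ]
      have h0 : φ a ≠ [] := hne a
      rcases List.exists_cons_of_ne_nil h0 with ⟨b, t, hbt⟩
      rw [hbt]
      simp only [List.map_cons, List.sum_cons]
      exact lt_of_lt_of_le (ih b) (Nat.le_add_right _ _)

omit hne in
lemma bs_zero (x : ℤ → A) : blockStart φ x 0 = 0 := by simp [blockStart]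

omit hne in
lemma bs_succ (x : ℤ → A) (j : ℤ) :
    blockStart φ x (j+1) = blockStart φ x j + ((φ (x j)).length : ℤ) := by
  rcases le_or_gt 0 j with h | h
  · rw [blockStart, blockStart, if_pos h, if_pos (by omega),
      show (j+1).toNat = j.toNat + 1 from by omega, Finset.sum_range_succ,
      Int.toNat_of_nonneg h]
  · rcases eq_or_ne j (-1) with rfl | h2
    · norm_num [blockStart]
    · rw [blockStart, blockStart, if_neg (by omega), if_neg (by omega),
        show (-j).toNat = (-(j+1)).toNat + 1 from by omega, Finset.sum_range_succ,
        Int.toNat_of_nonneg (by omega : (0:ℤ) ≤ -(j+1)),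
        show -(-(j+1)) - 1 = j from by ring]
      ring

lemma len_pos (a : A) : 1 ≤ ((φ a).length : ℤ) := by
  have := List.length_pos_iff.mpr (hne a)
  omega

lemma bs_mono (x : ℤ → A) {p q : ℤ} (h : p ≤ q) :
    blockStart φ x p + (q - p) ≤ blockStart φ x q := by
  refine Int.le_induction (motive := fun q _ => blockStart φ x p + (q - p) ≤ blockStart φ x q)
    (by omega) ?_ q h
  intro q hq ih
  have hlen := len_pos φ hne (x q)
  rw [bs_succ]
  omega

lemma block_unique (x : ℤ → A) {j k n : ℤ} (hj1 : blockStart φ x j ≤ n)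
    (hj2 : n < blockStart φ x (j+1)) (hk1 : blockStart φ x k ≤ n)
    (hk2 : n < blockStart φ x (k+1)) : k = j := by
  by_contra hne'
  rcases lt_or_gt_of_ne hne' with h | h
  · have := bs_mono φ hne x (by omega : k + 1 ≤ j); omega
  · have := bs_mono φ hne x (by omega : j + 1 ≤ k); omega

lemma exists_block_in (x : ℤ → A) {p q : ℤ} (hpq : p ≤ q) :
    ∀ n, blockStart φ x p ≤ n → n < blockStart φ x (q+1) →
    ∃ j, p ≤ j ∧ j ≤ q ∧ blockStart φ x j ≤ n ∧ n < blockStart φ x (j+1) := by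
  refine Int.le_induction (motive := fun q _ => ∀ n, blockStart φ x p ≤ n → n < blockStart φ x (q+1) →
    ∃ j, p ≤ j ∧ j ≤ q ∧ blockStart φ x j ≤ n ∧ n < blockStart φ x (j+1))
    (fun n h1 h2 => ⟨p, le_refl _, le_refl _, h1, h2⟩) ?_ q hpq
  intro q hq ih n h1 h2
  rcases lt_or_ge n (blockStart φ x (q+1)) with h | h
  · obtain ⟨j, a1, a2, a3, a4⟩ := ih n h1 h
    exact ⟨j, a1, by omega, a3, a4⟩
  · exact ⟨q+1, by omega, le_refl _, h, h2⟩

omit hne in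
lemma bs_congr (x y : ℤ → A) {p q : ℤ} (hp : p ≤ 0) (hq : 0 ≤ q)
    (hagree : ∀ t, p ≤ t → t ≤ q → x t = y t) {j : ℤ} (h1 : p ≤ j) (h2 : j ≤ q + 1) :
    blockStart φ x j = blockStart φ y j := by
  unfold blockStart
  rcases le_or_gt 0 j with h | h
  · rw [if_pos h, if_pos h]
    refine Finset.sum_congr rfl fun t ht => ?_
    have ht' := Finset.mem_range.mp ht
    rw [hagree t (by omega) (by omega)]
  · rw [if_neg (by omega), if_neg (by omega)]
    refine congrArg _ (Finset.sum_congr rfl fun t ht => ?_)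
    have ht' := Finset.mem_range.mp ht
    rw [hagree (-(t:ℤ) - 1) (by omega) (by omega)]

lemma decode [Inhabited A] (x : ℤ → A) {j n : ℤ} (h1 : blockStart φ x j ≤ n)
    (h2 : n < blockStart φ x (j+1)) :
    substZgen φ x n = (φ (x j)).getD (n - blockStart φ x j).toNat default := by
  have hex : ∃ k : ℤ, blockStart φ x k ≤ n ∧ n < blockStart φ x (k + 1) := ⟨j, h1, h2⟩
  have hu : hex.choose = j :=
    block_unique φ hne x h1 h2 hex.choose_spec.1 hex.choose_spec.2
  simp only [substZgen]
  rw [dif_pos hex, hu]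

lemma substZgen_congr [Inhabited A] (x y : ℤ → A) {p q : ℤ} (hp : p ≤ 0) (hq : 0 ≤ q)
    (hagree : ∀ t, p ≤ t → t ≤ q → x t = y t) {n : ℤ}
    (h1 : blockStart φ x p ≤ n) (h2 : n < blockStart φ x (q+1)) :
    substZgen φ x n = substZgen φ y n := by
  obtain ⟨j, hj1, hj2, hj3, hj4⟩ := exists_block_in φ hne x (by omega : p ≤ q) n h1 h2
  have e1 : blockStart φ x j = blockStart φ y j :=
    bs_congr φ x y hp hq hagree hj1 (by omega)
  have e2 : blockStart φ x (j+1) = blockStart φ y (j+1) :=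
    bs_congr φ x y hp hq hagree (by omega) (by omega)
  rw [decode φ hne x hj3 hj4, decode φ hne y (e1 ▸ hj3) (e2 ▸ hj4), e1,
    hagree j (by omega) (by omega)]

lemma oneblock [Inhabited A] {M : Type*} [AddCommMonoid M] (g : A → M) (x : ℤ → A) (j : ℤ) :
    ∑ n ∈ Finset.Ico (blockStart φ x j) (blockStart φ x (j+1)), g (substZgen φ x n)
      = ((φ (x j)).map g).sum := by
  have hsucc := bs_succ φ x j
  rw [hsucc, sum_Ico_range, ← getD_sum g (φ (x j))]
  refine Finset.sum_congr rfl fun k hk => ?_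
  have hk' := Finset.mem_range.mp hk
  rw [decode φ hne x (j := j) (by omega) (by rw [hsucc]; omega)]
  congr 2
  omega

lemma blocksum [Inhabited A] {M : Type*} [AddCommMonoid M] (g : A → M) (x : ℤ → A)
    {p q : ℤ} (hpq : p ≤ q) :
    ∑ n ∈ Finset.Ico (blockStart φ x p) (blockStart φ x q), g (substZgen φ x n)
      = ∑ t ∈ Finset.Ico p q, ((φ (x t)).map g).sum := by
  refine Int.le_induction (motive := fun q _ =>
      ∑ n ∈ Finset.Ico (blockStart φ x p) (blockStart φ x q), g (substZgen φ x n)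
      = ∑ t ∈ Finset.Ico p q, ((φ (x t)).map g).sum) (by simp) ?_ q hpq
  intro q hq ih
  have m1 : blockStart φ x p ≤ blockStart φ x q := by have := bs_mono φ hne x hq; omega
  have m2 : blockStart φ x q ≤ blockStart φ x (q+1) := by
    have := bs_mono φ hne x (by omega : q ≤ q + 1); omega
  rw [← sum_Ico_consec m1 m2, ih, oneblock φ hne, sum_Ico_succ_top' hq]

/-- sum of iterated-block lengths over a letter range -/
noncomputable def SB (i : ℕ) (x : ℤ → A) (p q : ℤ) : ℕ := ∑ t ∈ Finset.Ico p q, Wl φ i (x t)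

omit hne in
lemma SB_zero (x : ℤ → A) (p q : ℤ) : SB φ 0 x p q = (q - p).toNat := by
  simp [SB, Wl_zero]

omit hne in
lemma SB_single (i : ℕ) (x : ℤ → A) (t : ℤ) : SB φ i x t (t+1) = Wl φ i (x t) := by
  rw [SB, sum_Ico_succ_top' (le_refl t)]
  simp

lemma main_descent [Inhabited A] (c : ℕ → ℕ) (xs ys : ℕ → ℤ → A)
    (hx : ∀ i, xs i = shiftZ (c i) (substZgen φ (xs (i+1))) ∧ c i < (φ (xs (i+1) 0)).length)
    (hy : ∀ i, ys i = shiftZ (c i) (substZgen φ (ys (i+1))) ∧ c i < (φ (ys (i+1) 0)).length) :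
    ∀ i, ∀ p q : ℤ, p ≤ -1 → 1 ≤ q → (∀ n, p ≤ n → n ≤ q → xs i n = ys i n) →
      ∀ n : ℤ, -(SB φ i (xs i) p 0 : ℤ) ≤ n → n ≤ (SB φ i (xs i) 1 (q+1) : ℤ) →
      xs 0 n = ys 0 n := by
  intro i
  induction i with
  | zero =>
      intro p q hp hq hagree n h1 h2
      rw [SB_zero] at h1 h2
      exact hagree n (by omega) (by omega)
  | succ i ih =>
      intro p q hp hq hagree n h1 h2
      obtain ⟨hx1, hx2⟩ := hx i
      obtain ⟨hy1, hy2⟩ := hy i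
      set y := xs (i+1) with hydef
      set z := ys (i+1) with hzdef
      set ci : ℤ := (c i : ℤ) with hcidef
      have hci0 : 0 ≤ ci := by positivity
      have hbs0 : blockStart φ y 0 = 0 := bs_zero φ y
      have hbsp : blockStart φ y p ≤ p := by
        have := bs_mono φ hne y (show p ≤ 0 by omega); omega
      have hbs1 : blockStart φ y 1 = ((φ (y 0)).length : ℤ) := by
        have := bs_succ φ y 0; rw [hbs0] at this; simpa using this
      have hbsq1 : blockStart φ y 1 + q ≤ blockStart φ y (q+1) := by
        have := bs_mono φ hne y (show (1:ℤ) ≤ q + 1 by omega); omega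
      have hlenci : ci + 1 ≤ ((φ (y 0)).length : ℤ) := by
        rw [hcidef]; exact_mod_cast hx2
      set p' : ℤ := blockStart φ y p - ci with hp'def
      set q' : ℤ := blockStart φ y (q+1) - 1 - ci with hq'def
      have hp' : p' ≤ -1 := by omega
      have hq' : 1 ≤ q' := by omega
      -- evaluation of the chains one level down
      have hxeval : ∀ m : ℤ, xs i m = substZgen φ y (m + ci) := by
        intro m; rw [hx1]; rfl
      have hyeval : ∀ m : ℤ, ys i m = substZgen φ z (m + ci) := by
        intro m; rw [hy1]; rfl
      -- agreement at level i
      have hagree' : ∀ m, p' ≤ m → m ≤ q' → xs i m = ys i m := by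
        intro m hm1 hm2
        rw [hxeval, hyeval]
        rw [← substZgen_congr φ hne y z (show p ≤ 0 by omega) (show (0:ℤ) ≤ q by omega)
          hagree (show blockStart φ y p ≤ m + ci by omega)
          (show m + ci < blockStart φ y (q+1) by omega)]
      -- the two sum inequalities
      have hsum1 : (SB φ (i+1) y p 0 : ℕ) ≤ SB φ i (xs i) p' 0 := by
        have e1 : SB φ i (xs i) p' 0
            = ∑ m ∈ Finset.Ico (blockStart φ y p) ci, Wl φ i (substZgen φ y m) := by
          rw [SB, Finset.sum_congr rfl fun m _ => by rw [hxeval m],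
            sum_Ico_shift p' 0 ci (fun m => Wl φ i (substZgen φ y m)),
            show p' + ci = blockStart φ y p from by omega,
            show (0:ℤ) + ci = ci from by ring]
        have e2 : SB φ (i+1) y p 0
            = ∑ m ∈ Finset.Ico (blockStart φ y p) (0:ℤ), Wl φ i (substZgen φ y m) := by
          conv_rhs => rw [show (0:ℤ) = blockStart φ y 0 from hbs0.symm]
          rw [blocksum φ hne _ y (show p ≤ 0 by omega), SB]
          exact Finset.sum_congr rfl fun t _ => Wl_succ φ i (y t)
        rw [e1, e2]
        exact Finset.sum_le_sum_of_subset (Finset.Ico_subset_Ico_right (by omega))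
      have hsum2 : (SB φ (i+1) y 1 (q+1) : ℕ) ≤ SB φ i (xs i) 1 (q'+1) := by
        have e1 : SB φ i (xs i) 1 (q'+1)
            = ∑ m ∈ Finset.Ico (1 + ci) (blockStart φ y (q+1)), Wl φ i (substZgen φ y m) := by
          rw [SB, Finset.sum_congr rfl fun m _ => by rw [hxeval m],
            sum_Ico_shift 1 (q'+1) ci (fun m => Wl φ i (substZgen φ y m))]
          congr 1
          rw [hq'def]; ring_nf
        have e2 : SB φ (i+1) y 1 (q+1)
            = ∑ m ∈ Finset.Ico (blockStart φ y 1) (blockStart φ y (q+1)),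
                Wl φ i (substZgen φ y m) := by
          rw [blocksum φ hne _ y (show (1:ℤ) ≤ q+1 by omega), SB]
          exact Finset.sum_congr rfl fun t _ => Wl_succ φ i (y t)
        rw [e1, e2]
        exact Finset.sum_le_sum_of_subset (Finset.Ico_subset_Ico (by omega) (le_refl _))
      exact ih p' q' hp' hq' hagree' n (by push_cast at h1 h2 ⊢; omega)
        (by push_cast at h1 h2 ⊢; omega)

end DesubAux

/-- Let `φ` be a growing substitution on a finite alphabet `A` and `c : ℕ → ℕ` a
sequence. Then there are at most `|A|³` nonperiodic points `x ∈ X_φ` admitting a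
desubstitution sequence `(x^i)` in `X_φ` with `x⁰ = x`, `x^i = T^{c_i}(φ(x^{i+1}))` and
`0 ≤ c_i < |φ(x^{i+1}_0)|` for all `i`. -/
theorem card_nonperiodic_with_desubstitution_le {A : Type*} [Inhabited A] [Fintype A]
    (φ : A → List A) (hne : ∀ a, φ a ≠ [])
    (hgrow : ∀ a : A, Filter.Tendsto (fun n => ((substWord φ)^[n] [a]).length)
      Filter.atTop Filter.atTop)
    (c : ℕ → ℕ) :
    Set.Finite {x : ℤ → A | memXphi φ x ∧ ¬ periodicZ x ∧
        ∃ xs : ℕ → ℤ → A, xs 0 = x ∧ (∀ i, memXphi φ (xs i)) ∧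
          ∀ i, xs i = shiftZ (c i : ℤ) (substZgen φ (xs (i + 1))) ∧
            c i < (φ (xs (i + 1) 0)).length} ∧
    Nat.card {x : ℤ → A | memXphi φ x ∧ ¬ periodicZ x ∧
        ∃ xs : ℕ → ℤ → A, xs 0 = x ∧ (∀ i, memXphi φ (xs i)) ∧
          ∀ i, xs i = shiftZ (c i : ℤ) (substZgen φ (xs (i + 1))) ∧
            c i < (φ (xs (i + 1) 0)).length}
      ≤ Fintype.card A ^ 3 := by
  classical
  open DesubAux in
  set S : Set (ℤ → A) := {x : ℤ → A | memXphi φ x ∧ ¬ periodicZ x ∧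
        ∃ xs : ℕ → ℤ → A, xs 0 = x ∧ (∀ i, memXphi φ (xs i)) ∧
          ∀ i, xs i = shiftZ (c i : ℤ) (substZgen φ (xs (i + 1))) ∧
            c i < (φ (xs (i + 1) 0)).length} with hSdef
  have key : ∀ T : Finset (ℤ → A), ↑T ⊆ S → T.card ≤ Fintype.card A ^ 3 := by
    intro T hT
    by_contra hcard
    push_neg at hcard
    have hchain : ∀ x : {x // x ∈ T}, ∃ xs : ℕ → ℤ → A, xs 0 = ↑x ∧
        (∀ i, memXphi φ (xs i)) ∧
        ∀ i, xs i = shiftZ (c i : ℤ) (substZgen φ (xs (i + 1))) ∧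
          c i < (φ (xs (i + 1) 0)).length := by
      intro x
      exact (hT (Finset.mem_coe.mpr x.2)).2.2
    choose ch hch0 hchmem hchrec using hchain
    have hABC : Fintype.card (A × A × A) = Fintype.card A ^ 3 := by
      rw [Fintype.card_prod, Fintype.card_prod]; ring
    have pigeon : ∀ i : ℕ, ∃ pr : {x // x ∈ T} × {x // x ∈ T}, pr.1 ≠ pr.2 ∧
        (ch pr.1 i (-1), ch pr.1 i 0, ch pr.1 i 1)
          = (ch pr.2 i (-1), ch pr.2 i 0, ch pr.2 i 1) := by
      intro i
      have hlt : Fintype.card (A × A × A) < Fintype.card {x // x ∈ T} := by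
        rw [Fintype.card_coe, hABC]; omega
      obtain ⟨x, y, hxy, heq⟩ := Fintype.exists_ne_map_eq_of_card_lt
        (fun x : {x // x ∈ T} => (ch x i (-1), ch x i 0, ch x i 1)) hlt
      exact ⟨(x, y), hxy, heq⟩
    choose pr hprne hpreq using pigeon
    obtain ⟨p0, hfiber⟩ := Finite.exists_infinite_fiber pr
    have hIinf : (pr ⁻¹' {p0}).Infinite := Set.infinite_coe_iff.mp hfiber
    obtain ⟨i1, hi1⟩ := hIinf.nonempty
    have hne2 : p0.1 ≠ p0.2 := by
      have h := hprne i1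
      have h2 : pr i1 = p0 := hi1
      rwa [h2] at h
    set xs := ch p0.1 with hxsdef
    set ys := ch p0.2 with hysdef
    apply hne2
    have : (p0.1 : ℤ → A) = (p0.2 : ℤ → A) := by
      funext n
      have hev : ∀ᶠ i in Filter.atTop, ∀ a : A, (n.natAbs + 1) ≤ Wl φ i a := by
        rw [Filter.eventually_all]
        intro a
        exact (hgrow a).eventually_ge_atTop _
      obtain ⟨i0, hi0⟩ := Filter.eventually_atTop.mp hev
      obtain ⟨i, hiI⟩ := ((hIinf.diff (Set.finite_Iic i0)).nonempty)
      have hiI1 : pr i = p0 := hiI.1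
      have hii0 : i0 ≤ i := by
        have := hiI.2; simp only [Set.mem_Iic] at this; omega
      have hag : ∀ m : ℤ, -1 ≤ m → m ≤ 1 → xs i m = ys i m := by
        intro m hm1 hm2
        have heq := hpreq i
        rw [hiI1] at heq
        simp only [Prod.mk.injEq] at heq
        have hm : m = -1 ∨ m = 0 ∨ m = 1 := by omega
        rcases hm with rfl | rfl | rfl
        · exact heq.1
        · exact heq.2.1
        · exact heq.2.2
      have hb1 : SB φ i (xs i) (-1) 0 = Wl φ i (xs i (-1)) := by
        have := SB_single φ i (xs i) (-1); norm_num at this ⊢; exact this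
      have hb2 : SB φ i (xs i) 1 2 = Wl φ i (xs i 1) := by
        have := SB_single φ i (xs i) 1; norm_num at this ⊢; exact this
      have hw1 := hi0 i hii0 (xs i (-1))
      have hw2 := hi0 i hii0 (xs i 1)
      have h := main_descent φ hne c xs ys (hchrec p0.1) (hchrec p0.2) i (-1) 1
        (le_refl _) (le_refl _) hag n
        (by rw [hb1]; omega) (by rw [show (1:ℤ) + 1 = 2 from rfl, hb2]; omega)
      have h2 : ch p0.1 0 n = ch p0.2 0 n := h
      rw [hch0 p0.1, hch0 p0.2] at h2
      exact h2
    exact Subtype.ext this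
  have hfin : S.Finite := by
    by_contra hinf
    have hinf' : S.Infinite := hinf
    obtain ⟨T, hTsub, hTcard⟩ := hinf'.exists_subset_card_eq (Fintype.card A ^ 3 + 1)
    have := key T hTsub
    omega
  refine ⟨hfin, ?_⟩
  rw [Nat.card_eq_card_finite_toFinset hfin]
  exact key hfin.toFinset (by simp)
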